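/- Let α > 0, let n ∈ ℕ with n ≥ 1, and let x > 0. Then the left-sided Riemann–Liouville fractional integral of order α (with base point 0) of the thin-plate spline τ ↦ τ^(2n) ln τ satisfies (1/Γ(α)) ∫_0^x (x - τ)^(α-1) τ^(2n) ln(τ) dτ = (Γ(2n+1)/Γ(2n+1+α)) · x^(2n+α) · ( ln(x) + Ψ(2n+1) - Ψ(2n+1+α) ), where Ψ(t) = Γ'(t)/Γ(t) is the digamma function. -/

import Mathlib

open MeasureTheory Real

lemma beta_real (α s x : ℝ) (hα : 0 < α) (hs : 0 < s) (hx : 0 < x) :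
    ∫ τ in (0:ℝ)..x, (x - τ) ^ (α - 1) * τ ^ s =
      Real.Gamma (s + 1) * Real.Gamma α / Real.Gamma (s + 1 + α) * x ^ (s + α) := by
  have h1 := Complex.betaIntegral_scaled ((s : ℂ) + 1) (α : ℂ) hx
  have h2 := Complex.Gamma_mul_Gamma_eq_betaIntegral (s := (s:ℂ)+1) (t := (α:ℂ))
    (by simp; linarith) (by simpa using hα)
  have hΓ : Complex.Gamma ((s:ℂ)+1+α) ≠ 0 := by
    rw [show ((s:ℂ)+1+α) = ((s+1+α : ℝ) : ℂ) by push_cast; ring, Complex.Gamma_ofReal]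
    exact_mod_cast (Real.Gamma_pos_of_pos (by linarith)).ne'
  have hB : Complex.betaIntegral ((s:ℂ)+1) α =
      Complex.Gamma ((s:ℂ)+1) * Complex.Gamma α / Complex.Gamma ((s:ℂ)+1+α) := by
    field_simp [h2]
    rw [h2]; ring
  -- rewrite the complex integral as coercion of real integral
  have hcongr : ∀ τ ∈ Set.uIcc (0:ℝ) x,
      (((x - τ) ^ (α - 1) * τ ^ s : ℝ) : ℂ) = (τ:ℂ) ^ ((s:ℂ)+1-1) * ((x:ℂ) - τ) ^ ((α:ℂ)-1) := by
    intro τ hτ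
    rw [Set.uIcc_of_le hx.le] at hτ
    push_cast
    rw [Complex.ofReal_cpow (by linarith [hτ.2] : (0:ℝ) ≤ x - τ), Complex.ofReal_cpow hτ.1,
      show ((s:ℂ)+1-1) = (s:ℂ) by ring]
    push_cast
    ring
  have h3 : (((∫ τ in (0:ℝ)..x, (x - τ) ^ (α - 1) * τ ^ s) : ℝ) : ℂ)
      = (x:ℂ) ^ ((s:ℂ)+1+α-1) * Complex.betaIntegral ((s:ℂ)+1) α := by
    rw [← h1, ← intervalIntegral.integral_ofReal]
    exact intervalIntegral.integral_congr hcongr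
  rw [hB] at h3
  have h4 : (x:ℂ) ^ ((s:ℂ)+1+α-1) = ((x ^ (s+α) : ℝ) : ℂ) := by
    rw [Complex.ofReal_cpow hx.le, show ((s:ℂ)+1+α-1) = (((s+α:ℝ)):ℂ) by push_cast; ring]
  rw [h4] at h3
  apply Complex.ofReal_injective
  have g1 := Complex.Gamma_ofReal (s+1)
  have g2 := Complex.Gamma_ofReal (s+1+α)
  have g3 := Complex.Gamma_ofReal α
  push_cast at g1 g2
  rw [h3, g1, g2, g3]
  push_cast
  ring


lemma int_weight (α x : ℝ) (hα : 0 < α) (hx : 0 < x) :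
    IntervalIntegrable (fun τ : ℝ => (x - τ) ^ (α - 1)) volume 0 x := by
  have h := (intervalIntegral.intervalIntegrable_rpow'
      (show (-1:ℝ) < α - 1 by linarith) (a := 0) (b := x)).comp_sub_left x
  simpa using h.symm

theorem deriv_under (α x : ℝ) (hα : 0 < α) (hx : 0 < x) (n : ℕ) (hn : 1 ≤ n) :
    HasDerivAt (fun s : ℝ => ∫ τ in (0:ℝ)..x, (x - τ) ^ (α - 1) * τ ^ s)
      (∫ τ in (0:ℝ)..x, (x - τ) ^ (α - 1) * (τ ^ (2*(n:ℝ)) * Real.log τ)) (2*(n:ℝ)) := by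
  set s₀ : ℝ := 2*(n:ℝ) with hs₀
  have hs₀2 : (2:ℝ) ≤ s₀ := by
    have : (1:ℝ) ≤ (n:ℝ) := by exact_mod_cast hn
    simp only [hs₀]; linarith
  set C : ℝ := 1 + x ^ (s₀+1) * |Real.log x| with hC
  have huIoc : Set.uIoc (0:ℝ) x = Set.Ioc 0 x := Set.uIoc_of_le hx.le
  have hmeas : ∀ s : ℝ, Measurable fun τ : ℝ => (x - τ) ^ (α - 1) * τ ^ s := by
    intro s
    fun_prop
  have key := intervalIntegral.hasDerivAt_integral_of_dominated_loc_of_deriv_le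
    (F := fun (s : ℝ) (τ : ℝ) => (x - τ) ^ (α - 1) * τ ^ s)
    (F' := fun (s : ℝ) (τ : ℝ) => (x - τ) ^ (α - 1) * (τ ^ s * Real.log τ))
    (x₀ := s₀) (a := 0) (b := x) (bound := fun τ => C * (x - τ) ^ (α - 1))
    (s := Metric.ball s₀ 1) (Metric.ball_mem_nhds s₀ one_pos)
    (Filter.Eventually.of_forall fun s => ((hmeas s).aestronglyMeasurable))
    ?hint
    ?h'meas
    ?hbound
    ((int_weight α x hα hx).const_mul C)
    ?hdiff
  · exact key.2
  case hint =>
    apply ((int_weight α x hα hx).const_mul (x ^ s₀)).mono_fun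
      ((hmeas s₀).aestronglyMeasurable)
    rw [Filter.EventuallyLE, ae_restrict_iff' measurableSet_uIoc]
    refine Filter.Eventually.of_forall fun τ hτ => ?_
    rw [huIoc] at hτ
    have h1 : (0:ℝ) ≤ (x - τ) ^ (α - 1) := Real.rpow_nonneg (by linarith [hτ.2]) _
    have h2 : (0:ℝ) ≤ τ ^ s₀ := Real.rpow_nonneg hτ.1.le _
    have h3 : τ ^ s₀ ≤ x ^ s₀ := Real.rpow_le_rpow hτ.1.le hτ.2 (by linarith)
    simp only [norm_mul, Real.norm_eq_abs, abs_of_nonneg h1, abs_of_nonneg h2,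
      abs_of_nonneg (Real.rpow_nonneg hx.le s₀)]
    rw [mul_comm ((x-τ)^(α-1))]
    exact mul_le_mul_of_nonneg_right h3 h1
  case h'meas =>
    exact ((by fun_prop : Measurable fun τ : ℝ => (x - τ) ^ (α - 1) * τ ^ s₀).mul
      Real.measurable_log).aestronglyMeasurable.congr (Filter.Eventually.of_forall fun τ => by simp only [Pi.mul_apply]; ring)
  case hbound =>
    refine Filter.Eventually.of_forall fun τ hτ s hs => ?_
    rw [huIoc] at hτ
    have hτ0 : 0 < τ := hτ.1
    have hτx : τ ≤ x := hτ.2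
    have hsl : s₀ - 1 ≤ s ∧ s ≤ s₀ + 1 := by
      rw [Metric.mem_ball, Real.dist_eq, abs_lt] at hs
      constructor <;> linarith [hs.1, hs.2]
    have hs1 : (1:ℝ) ≤ s := by linarith [hsl.1]
    have h1 : (0:ℝ) ≤ (x - τ) ^ (α - 1) := Real.rpow_nonneg (by linarith) _
    have hlogbd : τ ^ s * |Real.log τ| ≤ C := by
      rcases le_or_gt τ 1 with h | h
      · have e1 : τ ^ s ≤ τ ^ (1:ℝ) := Real.rpow_le_rpow_of_exponent_ge hτ0 h hs1
        rw [Real.rpow_one] at e1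
        have hlog : Real.log τ ≤ 0 := Real.log_nonpos hτ0.le h
        have hexp : Real.exp (-Real.log τ) = τ⁻¹ := by
          rw [Real.exp_neg, Real.exp_log hτ0]
        have hle := Real.add_one_le_exp (-Real.log τ)
        rw [hexp] at hle
        have : τ * |Real.log τ| ≤ 1 := by
          rw [abs_of_nonpos hlog]
          have := mul_le_mul_of_nonneg_left hle hτ0.le
          rw [mul_inv_cancel₀ hτ0.ne'] at this
          nlinarith
        have := mul_le_mul_of_nonneg_right e1 (abs_nonneg (Real.log τ))
        have hC1 : (1:ℝ) ≤ C := by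
          have : (0:ℝ) ≤ x ^ (s₀+1) * |Real.log x| :=
            mul_nonneg (Real.rpow_nonneg hx.le _) (abs_nonneg _)
          simp only [hC]; linarith
        calc τ ^ s * |Real.log τ| ≤ τ * |Real.log τ| := by assumption
          _ ≤ 1 := by assumption
          _ ≤ C := hC1
      · have hx1 : 1 < x := lt_of_lt_of_le h hτx
        have e1 : τ ^ s ≤ τ ^ (s₀+1) := Real.rpow_le_rpow_of_exponent_le h.le hsl.2
        have e2 : τ ^ (s₀+1) ≤ x ^ (s₀+1) := Real.rpow_le_rpow hτ0.le hτx (by linarith)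
        have e3 : |Real.log τ| ≤ |Real.log x| := by
          rw [abs_of_nonneg (Real.log_nonneg h.le), abs_of_nonneg (Real.log_nonneg hx1.le)]
          exact Real.log_le_log hτ0 hτx
        have : τ ^ s * |Real.log τ| ≤ x ^ (s₀+1) * |Real.log x| :=
          mul_le_mul (e1.trans e2) e3 (abs_nonneg _) (Real.rpow_nonneg hx.le _)
        simp only [hC]; linarith
    have : ‖(x - τ) ^ (α - 1) * (τ ^ s * Real.log τ)‖
        = (x - τ) ^ (α - 1) * (τ ^ s * |Real.log τ|) := by
      rw [norm_mul, norm_mul, Real.norm_eq_abs, Real.norm_eq_abs, Real.norm_eq_abs,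
        abs_of_nonneg h1, abs_of_nonneg (Real.rpow_nonneg hτ0.le s)]
    rw [this]
    calc (x - τ) ^ (α - 1) * (τ ^ s * |Real.log τ|) ≤ (x - τ) ^ (α - 1) * C :=
        mul_le_mul_of_nonneg_left hlogbd h1
      _ = C * (x - τ) ^ (α - 1) := mul_comm _ _
  case hdiff =>
    refine Filter.Eventually.of_forall fun τ hτ s _ => ?_
    rw [huIoc] at hτ
    exact ((Real.hasStrictDerivAt_const_rpow hτ.1 s).hasDerivAt).const_mul _


theorem rl_integral_thin_plate_zero (α : ℝ) (hα : 0 < α) (n : ℕ) (hn : 1 ≤ n)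
    (x : ℝ) (hx : 0 < x) :
    (1 / Real.Gamma α) * ∫ τ in (0 : ℝ)..x, (x - τ) ^ (α - 1) * (τ ^ (2 * n) * Real.log τ) =
      (Real.Gamma (2 * n + 1) / Real.Gamma (2 * n + 1 + α)) * x ^ (2 * (n : ℝ) + α) *
        (Real.log x + deriv Real.Gamma (2 * n + 1) / Real.Gamma (2 * n + 1) -
          deriv Real.Gamma (2 * n + 1 + α) / Real.Gamma (2 * n + 1 + α)) := by
  set s₀ : ℝ := 2*(n:ℝ) with hs₀
  have hs₀2 : (2:ℝ) ≤ s₀ := by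
    have : (1:ℝ) ≤ (n:ℝ) := by exact_mod_cast hn
    simp only [hs₀]; linarith
  have hΓ1pos : 0 < Real.Gamma (s₀ + 1) := Real.Gamma_pos_of_pos (by linarith)
  have hΓ2pos : 0 < Real.Gamma (s₀ + 1 + α) := Real.Gamma_pos_of_pos (by linarith)
  have hΓαpos : 0 < Real.Gamma α := Real.Gamma_pos_of_pos hα
  have hd1 : HasDerivAt (fun s : ℝ => Real.Gamma (s + 1)) (deriv Real.Gamma (s₀ + 1)) s₀ := by
    have := (Real.differentiableAt_Gamma (s := s₀ + 1)
      (fun m => ne_of_gt (by linarith [Nat.cast_nonneg (α := ℝ) m] : -(m:ℝ) < s₀ + 1))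
      ).hasDerivAt.comp s₀ ((hasDerivAt_id s₀).add_const 1)
    simpa [Function.comp_def] using this
  have hd2 : HasDerivAt (fun s : ℝ => Real.Gamma (s + 1 + α)) (deriv Real.Gamma (s₀ + 1 + α)) s₀ := by
    have hinner : HasDerivAt (fun s : ℝ => s + 1 + α) 1 s₀ := by
      simpa using ((hasDerivAt_id s₀).add_const 1).add_const α
    have := (Real.differentiableAt_Gamma (s := s₀ + 1 + α)
      (fun m => ne_of_gt (by linarith [Nat.cast_nonneg (α := ℝ) m] : -(m:ℝ) < s₀ + 1 + α))
      ).hasDerivAt.comp s₀ hinner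
    simpa [Function.comp_def] using this
  have hd3 : HasDerivAt (fun s : ℝ => x ^ (s + α)) (x ^ (s₀ + α) * Real.log x) s₀ := by
    have := ((Real.hasStrictDerivAt_const_rpow hx (s₀ + α)).hasDerivAt).comp s₀
      ((hasDerivAt_id s₀).add_const α)
    simpa [Function.comp_def] using this
  have hR : HasDerivAt
      (fun s : ℝ => Real.Gamma (s + 1) * Real.Gamma α / Real.Gamma (s + 1 + α) * x ^ (s + α))
      (((deriv Real.Gamma (s₀ + 1) * Real.Gamma α * Real.Gamma (s₀ + 1 + α) -
          Real.Gamma (s₀ + 1) * Real.Gamma α * deriv Real.Gamma (s₀ + 1 + α)) /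
          (Real.Gamma (s₀ + 1 + α)) ^ 2) * x ^ (s₀ + α) +
        (Real.Gamma (s₀ + 1) * Real.Gamma α / Real.Gamma (s₀ + 1 + α)) *
          (x ^ (s₀ + α) * Real.log x)) s₀ :=
    ((hd1.mul_const (Real.Gamma α)).div hd2 hΓ2pos.ne').mul hd3
  have hEq : (fun s : ℝ => ∫ τ in (0:ℝ)..x, (x - τ) ^ (α - 1) * τ ^ s) =ᶠ[nhds s₀]
      (fun s : ℝ => Real.Gamma (s + 1) * Real.Gamma α / Real.Gamma (s + 1 + α) * x ^ (s + α)) := by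
    filter_upwards [eventually_gt_nhds (show (0:ℝ) < s₀ by linarith)] with s hs
    exact beta_real α s x hα hs hx
  have hG : HasDerivAt (fun s : ℝ => ∫ τ in (0:ℝ)..x, (x - τ) ^ (α - 1) * τ ^ s)
      (((deriv Real.Gamma (s₀ + 1) * Real.Gamma α * Real.Gamma (s₀ + 1 + α) -
          Real.Gamma (s₀ + 1) * Real.Gamma α * deriv Real.Gamma (s₀ + 1 + α)) /
          (Real.Gamma (s₀ + 1 + α)) ^ 2) * x ^ (s₀ + α) +
        (Real.Gamma (s₀ + 1) * Real.Gamma α / Real.Gamma (s₀ + 1 + α)) *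
          (x ^ (s₀ + α) * Real.log x)) s₀ :=
    hR.congr_of_eventuallyEq hEq
  have hval := (deriv_under α x hα hx n hn).unique hG
  have hcast : (∫ τ in (0:ℝ)..x, (x - τ) ^ (α - 1) * (τ ^ (2 * n) * Real.log τ)) =
      ∫ τ in (0:ℝ)..x, (x - τ) ^ (α - 1) * (τ ^ (2*(n:ℝ)) * Real.log τ) := by
    refine intervalIntegral.integral_congr fun τ _ => ?_
    rw [show (2*(n:ℝ)) = ((2*n : ℕ) : ℝ) by push_cast; ring, Real.rpow_natCast]
  rw [hcast, hval]
  have h1 : Real.Gamma (s₀ + 1 + α) ≠ 0 := hΓ2pos.ne'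
  have h2 : Real.Gamma (s₀ + 1) ≠ 0 := hΓ1pos.ne'
  have h3 : Real.Gamma α ≠ 0 := hΓαpos.ne'
  have hgoal : (2*(n:ℝ) + 1) = s₀ + 1 := by rw [hs₀]
  have hgoal2 : (2*(n:ℝ) + 1 + α) = s₀ + 1 + α := by rw [hs₀]
  rw [hgoal, hgoal2, show (2*(n:ℝ) + α) = s₀ + α by rw [hs₀]]
  field_simp
  ring
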